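/- arXiv:math/0201174 — 2 statements merged into one kernel-verified Lean document; each statement's English description precedes it below -/
import Mathlib

section
/- Let M be a matroid on a linearly ordered ground set, and let I, J be two distinct NBC sets of M of the same cardinality ℓ. Then there is no permutation τ of J such that the flag of closures cl({j_{τ(ℓ)}}) ⊆ cl({j_{τ(ℓ)}, j_{τ(ℓ-1)}}) ⊆ ... ⊆ cl(J) equals the flag cl({i_ℓ}) ⊆ cl({i_ℓ, i_{ℓ-1}}) ⊆ ... ⊆ cl(I), where I = (i_1 < ... < i_ℓ) is listed in increasing order. -/
open scoped BigOperators
open scoped Matroid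

/-- A circuit: a minimal dependent set. -/
def IsCircuit {n : ℕ} (M : Matroid (Fin n)) (C : Finset (Fin n)) : Prop :=
  M.Dep ↑C ∧ ∀ D : Finset (Fin n), D ⊂ C → ¬ M.Dep ↑D

/-- A broken circuit: a circuit (of size > 1) with its minimum removed. -/
def IsBrokenCircuit {n : ℕ} (M : Matroid (Fin n)) (B : Finset (Fin n)) : Prop :=
  ∃ (C : Finset (Fin n)) (a : Fin n), IsCircuit M C ∧ 1 < C.card ∧ a ∈ C ∧
    (∀ b ∈ C, a ≤ b) ∧ B = C.erase a

/-- A no-broken-circuit set. -/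
def NBCSet {n : ℕ} (M : Matroid (Fin n)) (I : Finset (Fin n)) : Prop :=
  M.Indep ↑I ∧ ∀ B ⊆ I, ¬ IsBrokenCircuit M B

/-- A unidependent set: contains exactly one circuit. -/
def Unidep {n : ℕ} (M : Matroid (Fin n)) (U : Finset (Fin n)) : Prop :=
  ↑U ⊆ M.E ∧ ∃! C : Finset (Fin n), C ⊆ U ∧ IsCircuit M C

/-- x is a loop. -/
def IsLoopM {n : ℕ} (M : Matroid (Fin n)) (x : Fin n) : Prop := M.Dep {x}

/-- Deletion of a single element. -/
noncomputable def mdel {n : ℕ} (M : Matroid (Fin n)) (x : Fin n) : Matroid (Fin n) :=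
  M ↾ (M.E \ {x})

/-- Contraction of a single element, via duality. -/
noncomputable def mcon {n : ℕ} (M : Matroid (Fin n)) (x : Fin n) : Matroid (Fin n) :=
  (M✶ ↾ (M.E \ {x}))✶

open scoped Classical in
/-- The rank of a finite set: maximal cardinality of an independent subset. -/
noncomputable def rkFin {n : ℕ} (M : Matroid (Fin n)) (U : Finset (Fin n)) : ℕ :=
  (U.powerset.filter fun I : Finset (Fin n) => M.Indep (↑I : Set (Fin n))).sup Finset.card

/-- A simple matroid with ground set everything. -/
def SimpleGround {n : ℕ} (M : Matroid (Fin n)) : Prop :=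
  M.E = Set.univ ∧ (∀ i : Fin n, M.Indep {i}) ∧
    ∀ i j : Fin n, i ≠ j → M.Indep {i, j}

/-- Number of inversions of a list. -/
def listInv {n : ℕ} : List (Fin n) → ℕ
  | [] => 0
  | a :: t => (t.countP fun b => decide (b < a)) + listInv t

/-- χ evaluated on an ordered set, with the sign convention χ(X^σ) = sgn(σ) χ(X). -/
def ochi {n : ℕ} {K : Type*} [Field K] (χ : Finset (Fin n) → K) (l : List (Fin n)) : K :=
  (-1 : K) ^ listInv l * χ l.toFinset

/-- The flag of flats associated to an ordered set: closures of its suffixes. -/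
def flagOf {n : ℕ} (M : Matroid (Fin n)) (l : List (Fin n)) : List (Set (Fin n)) :=
  l.tails.map fun t => M.closure ↑t.toFinset

/-- An element `b` is active in `I`: it lies in `cl(I) \ I` and is the minimum of the
(unique) circuit contained in `I ∪ {b}`. -/
def ActiveIn {n : ℕ} (M : Matroid (Fin n)) (I : Finset (Fin n)) (b : Fin n) : Prop :=
  b ∈ M.closure ↑I ∧ b ∉ I ∧
    ∃ C : Finset (Fin n), C ⊆ insert b I ∧ IsCircuit M C ∧ ∀ c ∈ C, b ≤ c


/-- An inactive unidependent set: `min C(U)` is the minimal active element of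
`U \\ min C(U)`. -/
def InactiveUnidep {n : ℕ} (M : Matroid (Fin n)) (U : Finset (Fin n)) : Prop :=
  Unidep M U ∧ ∃ (C : Finset (Fin n)) (a : Fin n), C ⊆ U ∧ IsCircuit M C ∧ a ∈ C ∧
    (∀ b ∈ C, a ≤ b) ∧ ∀ b : Fin n, ActiveIn M (U.erase a) b → a ≤ b

section Alg

variable {n : ℕ} {K : Type*} [Field K]

/-- The defining relations of the graded algebra `E`: squares of generators vanish and
generators commute up to the nonzero scalars `β i j` (for `i < j`). -/
inductive ERel (n : ℕ) (K : Type*) [Field K] (β : Fin n → Fin n → K) :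
    FreeAlgebra K (Fin n) → FreeAlgebra K (Fin n) → Prop
  | sq (i : Fin n) : ERel n K β (FreeAlgebra.ι K i * FreeAlgebra.ι K i) 0
  | comm {i j : Fin n} (h : i < j) :
      ERel n K β (FreeAlgebra.ι K j * FreeAlgebra.ι K i)
        (β i j • (FreeAlgebra.ι K i * FreeAlgebra.ι K j))

/-- The algebra `E` generated by `e_1, …, e_n` with `e_i² = 0`, `e_j e_i = β i j • e_i e_j`. -/
abbrev EAlg (n : ℕ) (K : Type*) [Field K] (β : Fin n → Fin n → K) := RingQuot (ERel n K β)

/-- The generator `e_i` of `E`. -/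
noncomputable def gen (β : Fin n → Fin n → K) (i : Fin n) : EAlg n K β :=
  RingQuot.mkAlgHom K (ERel n K β) (FreeAlgebra.ι K i)

/-- `e_X`: the product of the generators indexed by `X`, in increasing order. -/
noncomputable def eset (β : Fin n → Fin n → K) (X : Finset (Fin n)) : EAlg n K β :=
  ((X.sort (· ≤ ·)).map (gen β)).prod

/-- The χ-boundary `∂e_X = Σ_p (-1)^p χ(X \ i_p) e_{X \ i_p}` (with `X = {i_1 < … < i_m}`,
`p` running from 1 to m). -/
noncomputable def bdry (β : Fin n → Fin n → K) (χ : Finset (Fin n) → K)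
    (X : Finset (Fin n)) : EAlg n K β :=
  ((X.sort (· ≤ ·)).zipIdx.map fun pi =>
    ((-1 : K) ^ (pi.2 + 1) * χ (X.erase pi.1)) • eset β (X.erase pi.1)).sum

end Alg

section Chi

variable {n : ℕ} {K : Type*} [Field K]

/-- Condition (UC1). -/
def UC1 (M : Matroid (Fin n)) (χ : Finset (Fin n) → K) : Prop :=
  ∀ I : Finset (Fin n), χ I ≠ 0 ↔ M.Indep ↑I

/-- Condition (UC2). -/
def UC2 (β : Fin n → Fin n → K) (M : Matroid (Fin n)) (χ : Finset (Fin n) → K) : Prop :=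
  ∀ U U' : Finset (Fin n), Unidep M U → Unidep M U' → U' ⊆ U →
    ∃ ε : K, ε ≠ 0 ∧ bdry β χ U = ε • (bdry β χ U' * eset β (U \ U'))

/-- The (right) ideal `I_χ(M)` of `E`, as a `K`-subspace: it is spanned by the products
of the boundaries of circuits of size `> 1` (and of the generators indexed by loops)
with arbitrary elements of `E`. -/
noncomputable def chiIdeal (β : Fin n → Fin n → K) (M : Matroid (Fin n))
    (χ : Finset (Fin n) → K) : Submodule K (EAlg n K β) :=
  Submodule.span K
    ({ y | ∃ C : Finset (Fin n), IsCircuit M C ∧ 1 < C.card ∧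
        ∃ z : EAlg n K β, y = bdry β χ C * z } ∪
     { y | ∃ i : Fin n, IsCircuit M {i} ∧ ∃ z : EAlg n K β, y = gen β i * z })

/-- The χ-algebra `A_χ(M) = E / I_χ(M)` (as a `K`-vector space). -/
abbrev AChi (β : Fin n → Fin n → K) (M : Matroid (Fin n)) (χ : Finset (Fin n) → K) :=
  EAlg n K β ⧸ chiIdeal β M χ

/-- The residue class `[e_X]` in `A_χ(M)`. -/
noncomputable def cls (β : Fin n → Fin n → K) (M : Matroid (Fin n))
    (χ : Finset (Fin n) → K) (X : Finset (Fin n)) : AChi β M χ :=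
  Submodule.Quotient.mk (eset β X)

/-- The induced map `χ_{M/x}`, `I ↦ χ(I * x)`. -/
def chiC (χ : Finset (Fin n) → K) (x : Fin n) : Finset (Fin n) → K :=
  fun I => ochi χ (I.sort (· ≤ ·) ++ [x])

/-- Iterated single-element contraction along a list (the head is contracted last). -/
noncomputable def contrList (M : Matroid (Fin n)) : List (Fin n) → Matroid (Fin n)
  | [] => M
  | x :: t => mcon (contrList M t) x

/-- Iterated induced `χ` along a list. -/
def chiL (χ : Finset (Fin n) → K) : List (Fin n) → (Finset (Fin n) → K)
  | [] => χ
  | x :: t => chiC (chiL χ t) x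

/-- The iterated residue `p_{I^σ} = p_{i_{σ(1)}} ∘ ⋯ ∘ p_{i_{σ(ℓ)}}` associated to a family
`P` of single-element residue maps and an ordered set (a list). -/
noncomputable def pIter (β : Fin n → Fin n → K)
    (P : ∀ (M : Matroid (Fin n)) (χ : Finset (Fin n) → K) (x : Fin n),
      AChi β M χ →ₗ[K] AChi β (mcon M x) (chiC χ x))
    (M : Matroid (Fin n)) (χ : Finset (Fin n) → K) :
    (l : List (Fin n)) → (AChi β M χ →ₗ[K] AChi β (contrList M l) (chiL χ l))
  | [] => LinearMap.id
  | x :: t => (P (contrList M t) (chiL χ t) x).comp (pIter β P M χ t)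

/-- The defining property of the residue map `p_x` on (classes of) independent sets. -/
def ResFormula (β : Fin n → Fin n → K)
    (P : ∀ (M : Matroid (Fin n)) (χ : Finset (Fin n) → K) (x : Fin n),
      AChi β M χ →ₗ[K] AChi β (mcon M x) (chiC χ x)) : Prop :=
  ∀ (M : Matroid (Fin n)) (χ : Finset (Fin n) → K) (x : Fin n), ¬ IsLoopM M x →
    ∀ I : Finset (Fin n), M.Indep ↑I →
      (x ∈ I → P M χ x (cls β M χ I) = cls β (mcon M x) (chiC χ x) (I.erase x)) ∧
      (∀ y ∈ I, IsCircuit M {x, y} → P M χ x (cls β M χ I) =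
        (ochi χ ((I.erase y).sort (· ≤ ·) ++ [x]) /
          ochi χ ((I.erase y).sort (· ≤ ·) ++ [y])) •
            cls β (mcon M x) (chiC χ x) (I.erase y)) ∧
      (x ∉ I → (∀ y ∈ I, ¬ IsCircuit M {x, y}) → P M χ x (cls β M χ I) = 0)

end Chi


private lemma nbc_loop_of_below {n : ℕ} {M : Matroid (Fin n)} {T X : Finset (Fin n)} {a : Fin n}
    (hT : NBCSet M T) (hXT : X ⊆ T) (ha : a ∈ M.closure (↑X : Set (Fin n)))
    (hlt : ∀ x ∈ X, a < x) : a ∈ M.closure (∅ : Set (Fin n)) := by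
  classical
  have hXind : M.Indep (↑X : Set (Fin n)) := hT.1.subset (Finset.coe_subset.2 hXT)
  have haX : a ∉ X := fun h => lt_irrefl a (hlt a h)
  by_contra hloop
  have hdep : M.Dep (↑(insert a X) : Set (Fin n)) := by
    rw [Finset.coe_insert]
    exact hXind.insert_dep_iff.2 ⟨ha, by simpa using haX⟩
  obtain ⟨C, hCmem, hCmin⟩ := Finset.exists_min_image
    ((insert a X).powerset.filter fun D : Finset (Fin n) => M.Dep (↑D : Set (Fin n))) Finset.card
    ⟨insert a X, by
      rw [Finset.mem_filter, Finset.mem_powerset]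
      exact ⟨Finset.Subset.refl _, hdep⟩⟩
  rw [Finset.mem_filter, Finset.mem_powerset] at hCmem
  obtain ⟨hCsub, hCdep⟩ := hCmem
  have hCirc : IsCircuit M C := by
    refine ⟨hCdep, fun D hD hDdep => ?_⟩
    have := hCmin D (by rw [Finset.mem_filter, Finset.mem_powerset]
                        exact ⟨hD.1.trans hCsub, hDdep⟩)
    exact absurd this (not_le.2 (Finset.card_lt_card hD))
  have haC : a ∈ C := by
    by_contra haC
    have hCX : C ⊆ X := fun b hb =>
      (Finset.mem_insert.1 (hCsub hb)).resolve_left (fun h => haC (h ▸ hb))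
    exact hCdep.not_indep (hXind.subset (Finset.coe_subset.2 hCX))
  have hminC : ∀ b ∈ C, a ≤ b := by
    intro b hb
    rcases Finset.mem_insert.1 (hCsub hb) with h | h
    · exact le_of_eq h.symm
    · exact (hlt b h).le
  have hcard : 1 < C.card := by
    rcases Nat.lt_or_ge 1 C.card with h | h
    · exact h
    · exfalso
      have hc1 : C.card = 1 := le_antisymm h (Finset.card_pos.2 ⟨a, haC⟩)
      obtain ⟨x, hx⟩ := Finset.card_eq_one.1 hc1
      have hxa : x = a := by
        have := haC; rw [hx, Finset.mem_singleton] at this; exact this.symm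
      subst hxa
      apply hloop
      rw [(M.empty_indep).mem_closure_iff]
      left
      have : (↑C : Set (Fin n)) = insert x (∅ : Set (Fin n)) := by
        rw [hx]; simp
      rwa [this] at hCdep
  refine hT.2 (C.erase a) ?_ ⟨C, a, hCirc, hcard, haC, hminC, rfl⟩
  intro b hb
  have hb' := Finset.mem_erase.1 hb
  exact hXT ((Finset.mem_insert.1 (hCsub hb'.2)).resolve_left hb'.1)

/-- two distinct NBC sets of the same cardinality never have equal flags,
for any ordering of `J` (with `I` taken in increasing order). -/
theorem nbc_flags_distinct {n : ℕ} (M : Matroid (Fin n)) (ℓ : ℕ) (I J : Finset (Fin n))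
    (hI : NBCSet M I) (hJ : NBCSet M J) (hIc : I.card = ℓ) (hJc : J.card = ℓ)
    (hne : I ≠ J) :
    ¬ ∃ lj : List (Fin n), lj.Nodup ∧ lj.toFinset = J ∧
        flagOf M lj = flagOf M (I.sort (· ≤ ·)) := by
  classical
  rintro ⟨lj, hnd, hJtf, hflag⟩
  set li := I.sort (· ≤ ·) with hli
  have hliN : li.Nodup := I.sort_nodup _
  have hliT : li.toFinset = I := I.sort_toFinset _
  have hliL : li.length = ℓ := by rw [hli, Finset.length_sort, hIc]
  have hljL : lj.length = ℓ := by
    rw [← List.toFinset_card_of_nodup hnd, hJtf, hJc]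
  have hsort : li.Pairwise (· < ·) := I.sortedLT_sort.pairwise
  have hflag' : ∀ k, M.closure (↑(lj.drop k).toFinset : Set (Fin n))
      = M.closure (↑(li.drop k).toFinset : Set (Fin n)) := by
    intro k
    rcases le_or_gt k ℓ with hk | hk
    · have h1 : k < lj.tails.length := by rw [List.length_tails, hljL]; omega
      have h2 : k < li.tails.length := by rw [List.length_tails, hliL]; omega
      have h := congrArg (fun L : List (Set (Fin n)) => L[k]?) hflag
      simp only [flagOf, List.getElem?_map] at h
      rw [List.getElem?_eq_getElem h1, List.getElem?_eq_getElem h2] at h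
      simp only [Option.map_some, List.getElem_tails, Option.some.injEq] at h
      exact h
    · rw [List.drop_eq_nil_of_le (by omega), List.drop_eq_nil_of_le (by omega)]
  have key : ∀ d, d ≤ ℓ → (lj.drop (ℓ - d)).toFinset = (li.drop (ℓ - d)).toFinset := by
    intro d
    induction d with
    | zero =>
      intro _
      rw [List.drop_eq_nil_of_le (by omega), List.drop_eq_nil_of_le (by omega)]
    | succ d ih =>
      intro hd
      have ih' := ih (by omega)
      set k := ℓ - (d + 1) with hk
      have hk1 : ℓ - d = k + 1 := by omega
      rw [hk1] at ih'
      have hjk : k < lj.length := by omega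
      have hik : k < li.length := by omega
      have hdj : lj.drop k = lj[k] :: lj.drop (k + 1) := List.drop_eq_getElem_cons hjk
      have hdi : li.drop k = li[k] :: li.drop (k + 1) := List.drop_eq_getElem_cons hik
      set a := li[k] with hadef
      set b := lj[k] with hbdef
      set S : Finset (Fin n) := (li.drop (k + 1)).toFinset with hS
      set SJ : Finset (Fin n) := (lj.drop (k + 1)).toFinset with hSJ
      have hSSJ : SJ = S := ih'
      -- a is below everything in S
      have haS_lt : ∀ x ∈ S, a < x := by
        intro x hx
        have hpw : List.Pairwise (· < ·) (li.drop k) :=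
          hsort.sublist (List.drop_sublist k li)
        rw [hdi, List.pairwise_cons] at hpw
        exact hpw.1 x (List.mem_toFinset.1 hx)
      have ha_notS : a ∉ S := fun h => lt_irrefl a (haS_lt a h)
      have hnd_drop : (lj.drop k).Nodup := hnd.sublist (List.drop_sublist k lj)
      have hb_notSJ : b ∉ SJ := by
        rw [hdj, List.nodup_cons] at hnd_drop
        exact fun h => hnd_drop.1 (List.mem_toFinset.1 h)
      have hb_notS : b ∉ S := hSSJ ▸ hb_notSJ
      -- subset relations
      have hS_subI : S ⊆ I := by
        intro x hx
        rw [← hliT]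
        exact List.mem_toFinset.2 (List.drop_subset _ _ (List.mem_toFinset.1 hx))
      have haI : a ∈ I := by
        rw [← hliT]
        exact List.mem_toFinset.2 (List.getElem_mem hik)
      have hbJ : b ∈ J := by
        rw [← hJtf]
        exact List.mem_toFinset.2 (List.getElem_mem hjk)
      have hSJ_subJ : SJ ⊆ J := by
        intro x hx
        rw [← hJtf]
        exact List.mem_toFinset.2 (List.drop_subset _ _ (List.mem_toFinset.1 hx))
      have hiaS_subI : insert a S ⊆ I := Finset.insert_subset haI hS_subI
      have hibSJ_subJ : insert b SJ ⊆ J := Finset.insert_subset hbJ hSJ_subJ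
      -- toFinset of drops
      have htfi : (li.drop k).toFinset = insert a S := by rw [hdi]; simp [hS]
      have htfj : (lj.drop k).toFinset = insert b SJ := by rw [hdj]; simp [hSJ]
      -- the common flat F
      have hF : M.closure (↑(insert b SJ) : Set (Fin n))
          = M.closure (↑(insert a S) : Set (Fin n)) := by
        rw [← htfi, ← htfj]; exact hflag' k
      -- independence facts
      have hSind : M.Indep (↑S : Set (Fin n)) := hI.1.subset (Finset.coe_subset.2 hS_subI)
      have hiaSind : M.Indep (↑(insert a S) : Set (Fin n)) :=
        hI.1.subset (Finset.coe_subset.2 hiaS_subI)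
      have hibSJind : M.Indep (↑(insert b SJ) : Set (Fin n)) :=
        hJ.1.subset (Finset.coe_subset.2 hibSJ_subJ)
      -- a ∉ cl S
      have ha_ncl : a ∉ M.closure (↑S : Set (Fin n)) := by
        intro h
        have hdep := (hSind.mem_closure_iff_of_notMem (by simpa using ha_notS)).1 h
        rw [← Finset.coe_insert] at hdep
        exact hdep.not_indep hiaSind
      -- b ∉ cl S
      have hb_ncl : b ∉ M.closure (↑S : Set (Fin n)) := by
        intro h
        have hdep := (hSind.mem_closure_iff_of_notMem (by simpa using hb_notS)).1 h
        rw [← Finset.coe_insert, ← hSSJ] at hdep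
        exact hdep.not_indep hibSJind
      -- a ∈ F and b ∈ F
      have haF : a ∈ M.closure (↑(insert a S) : Set (Fin n)) :=
        M.subset_closure _ hiaSind.subset_ground (by simp)
      have hbF : b ∈ M.closure (↑(insert a S) : Set (Fin n)) := by
        rw [← hF]
        exact M.subset_closure _ hibSJind.subset_ground (by simp)
      have hab : a = b := by
        rcases lt_trichotomy a b with h | h | h
        · exfalso
          have halt : ∀ x ∈ insert b SJ, a < x := by
            intro x hx
            rcases Finset.mem_insert.1 hx with rfl | hx'
            · exact h
            · exact haS_lt x (hSSJ ▸ hx')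
          have := nbc_loop_of_below hJ hibSJ_subJ (hF ▸ haF) halt
          exact ha_ncl (M.closure_subset_closure (Set.empty_subset _) this)
        · exact h
        · exfalso
          have hblt : ∀ x ∈ insert a S, b < x := by
            intro x hx
            rcases Finset.mem_insert.1 hx with rfl | hx'
            · exact h
            · exact h.trans (haS_lt x hx')
          have := nbc_loop_of_below hI hiaS_subI hbF hblt
          exact hb_ncl (M.closure_subset_closure (Set.empty_subset _) this)
      rw [htfi, htfj, hSSJ, hab]
  have hfin := key ℓ le_rfl
  rw [Nat.sub_self] at hfin
  simp only [List.drop_zero] at hfin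
  rw [hJtf, hliT] at hfin
  exact hne hfin.symm
end

section
/- Let M be a matroid on a linearly ordered ground set, let I be an NBC set and J an independent set with |I| = |J| = ℓ. Suppose τ is a permutation of J with Flag(J^τ) = Flag(I^id), where I^id lists I in increasing order. If, writing I = (i_1, ..., i_ℓ) increasingly and J^τ = (j_{τ(1)}, ..., j_{τ(ℓ)}), the largest index m with i_m ≠ j_{τ(m)} exists, then there is a circuit C of M with i_m, j_{τ(m)} ∈ C ⊆ {i_m, j_{τ(m)}, i_{m+1}, ..., i_ℓ}. -/
open scoped BigOperators
open scoped Matroid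

lemma exists_circuit_subset {n : ℕ} (M : Matroid (Fin n)) (D : Finset (Fin n))
    (hD : M.Dep ↑D) : ∃ C ⊆ D, IsCircuit M C := by
  induction D using Finset.strongInduction with
  | _ D ih =>
    by_cases h : ∀ D' : Finset (Fin n), D' ⊂ D → ¬ M.Dep ↑D'
    · exact ⟨D, le_refl _, hD, h⟩
    · push_neg at h
      obtain ⟨D', hsub, hdep⟩ := h
      obtain ⟨C, hC1, hC2⟩ := ih D' hsub hdep
      exact ⟨C, hC1.trans hsub.subset, hC2⟩


/-- if `I` is NBC, `J` independent with `Flag(J^τ) = Flag(I)` and `m` is the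
largest index of disagreement, then there is a circuit
`C ⊆ {i_m, j_{τ(m)}, i_{m+1}, …, i_ℓ}` containing `i_m` and `j_{τ(m)}`. -/
theorem flag_mismatch_circuit {n : ℕ} (M : Matroid (Fin n)) (ℓ : ℕ)
    (I J : Finset (Fin n))
    (hI : NBCSet M I) (hJ : M.Indep ↑J) (hIc : I.card = ℓ) (hJc : J.card = ℓ)
    (lj : List (Fin n)) (hnd : lj.Nodup) (hjt : lj.toFinset = J)
    (hflag : flagOf M lj = flagOf M (I.sort (· ≤ ·)))
    (m : ℕ) (hm : m < ℓ) (hlen : lj.length = ℓ) (hilen : (I.sort (· ≤ ·)).length = ℓ)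
    (hmne : (I.sort (· ≤ ·)).get ⟨m, by omega⟩ ≠ lj.get ⟨m, by omega⟩)
    (hafter : ∀ q : ℕ, m < q → ∀ hq : q < ℓ,
      (I.sort (· ≤ ·)).get ⟨q, by omega⟩ = lj.get ⟨q, by omega⟩) :
    ∃ C : Finset (Fin n), IsCircuit M C ∧
      (I.sort (· ≤ ·)).get ⟨m, by omega⟩ ∈ C ∧ lj.get ⟨m, by omega⟩ ∈ C ∧
      C ⊆ insert ((I.sort (· ≤ ·)).get ⟨m, by omega⟩)
          (insert (lj.get ⟨m, by omega⟩) ((I.sort (· ≤ ·)).drop (m + 1)).toFinset) := by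
  classical
  set li := I.sort (· ≤ ·) with hli
  have hmi : m < li.length := by omega
  have hmj : m < lj.length := by omega
  set i : Fin n := li.get ⟨m, hmi⟩ with hi
  set j : Fin n := lj.get ⟨m, hmj⟩ with hj
  -- the common tail
  have hdropeq : lj.drop (m+1) = li.drop (m+1) := by
    apply List.ext_getElem
    · simp [hlen, hilen]
    · intro k h1 h2
      have h3 : m + 1 + k < ℓ := by
        have := List.length_drop (i := m+1) (l := lj)
        omega
      have := hafter (m+1+k) (by omega) h3
      simpa [List.getElem_drop] using this.symm
  set T : Finset (Fin n) := (li.drop (m+1)).toFinset with hT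
  -- closure equality at index m
  have hclo : M.closure ↑((lj.drop m).toFinset) = M.closure ↑((li.drop m).toFinset) := by
    have h1 : m < lj.tails.length := by simp; omega
    have h2 : m < li.tails.length := by simp; omega
    have := congrArg (fun l => l[m]?) hflag
    simp only [flagOf, List.getElem?_map] at this
    rw [List.getElem?_eq_getElem h1, List.getElem?_eq_getElem h2] at this
    simpa [List.getElem_tails] using this
  have hdi : li.drop m = i :: li.drop (m+1) := List.drop_eq_getElem_cons hmi
  have hdj : lj.drop m = j :: lj.drop (m+1) := List.drop_eq_getElem_cons hmj
  have hclo2 : M.closure ↑(insert j T) = M.closure ↑(insert i T) := by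
    have := hclo
    rw [hdi, hdj, hdropeq] at this
    simpa [hT] using this
  -- independence facts
  have hliI : li.toFinset = I := Finset.sort_toFinset I _
  have hindi : M.Indep ↑(insert i T) := by
    apply hI.1.subset
    intro x hx
    simp only [Finset.coe_insert, Set.mem_insert_iff, hT, Finset.mem_coe,
      List.mem_toFinset] at hx
    have : x ∈ li := by
      rcases hx with h | h
      · rw [h]; exact List.get_mem _ _
      · exact List.mem_of_mem_drop h
    rw [← hliI]; simpa using this
  have hindj : M.Indep ↑(insert j T) := by
    apply hJ.subset
    intro x hx
    simp only [Finset.coe_insert, Set.mem_insert_iff, hT, Finset.mem_coe,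
      List.mem_toFinset] at hx
    have : x ∈ lj := by
      rcases hx with h | h
      · rw [h]; exact List.get_mem _ _
      · rw [← hdropeq] at h; exact List.mem_of_mem_drop h
    rw [← hjt]; simpa using this
  have hjE : (j : Fin n) ∈ M.E := hindj.subset_ground (by simp)
  have hjcl : j ∈ M.closure ↑(insert i T) := by
    rw [← hclo2]
    exact M.mem_closure_of_mem' (by simp) hjE
  have hjnotT : j ∉ T := by
    have hndj : (lj.drop m).Nodup := (List.drop_sublist m lj).nodup hnd
    rw [hdj, hdropeq] at hndj
    intro hc
    exact (List.nodup_cons.mp hndj).1 (by simpa [hT, List.mem_toFinset] using hc)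
  have hji : j ∉ insert i T := by
    simp only [Finset.mem_insert]
    rintro (h | h)
    · exact hmne h.symm
    · exact hjnotT h
  have hinotT : i ∉ T := by
    have hndi : (li.drop m).Nodup := (List.drop_sublist m li).nodup (I.sort_nodup _)
    rw [hdi] at hndi
    intro hc
    exact (List.nodup_cons.mp hndi).1 (by simpa [hT, List.mem_toFinset] using hc)
  -- dependence of the union
  have hdep : M.Dep ↑(insert j (insert i T)) := by
    rw [Matroid.dep_iff]
    constructor
    · rw [Finset.coe_insert]
      intro hcon
      rcases hindi.insert_indep_iff.mp hcon with h | h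
      · exact h.2 hjcl
      · exact hji (by exact_mod_cast h)
    · intro x hx
      simp only [Finset.coe_insert, Set.mem_insert_iff] at hx
      rcases hx with h | h
      · rw [h]; exact hjE
      · exact hindi.subset_ground (by simpa using h)
  obtain ⟨C, hCsub, hC⟩ := exists_circuit_subset M _ hdep
  have hjC : j ∈ C := by
    by_contra hjc
    refine hC.1.not_indep (hindi.subset ?_)
    intro x hx
    have hx' : x ∈ C := hx
    have := hCsub hx'
    rcases Finset.mem_insert.mp this with h | h
    · exact absurd (h ▸ hx') hjc
    · exact h
  have hiC : i ∈ C := by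
    by_contra hic
    refine hC.1.not_indep (hindj.subset ?_)
    intro x hx
    have hx' : x ∈ C := hx
    have := hCsub hx'
    rcases Finset.mem_insert.mp this with h | h
    · simp [h]
    · rcases Finset.mem_insert.mp h with h' | h'
      · exact absurd (h' ▸ hx') hic
      · simp [h']
  refine ⟨C, hC, hiC, hjC, ?_⟩
  intro x hx
  have := hCsub hx
  rcases Finset.mem_insert.mp this with h | h
  · exact Finset.mem_insert_of_mem (h ▸ Finset.mem_insert_self _ _)
  · rcases Finset.mem_insert.mp h with h' | h'
    · exact h' ▸ Finset.mem_insert_self _ _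
    · exact Finset.mem_insert_of_mem (Finset.mem_insert_of_mem h')
end
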